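/- arXiv:0801.1606 — 2 statements merged into one kernel-verified Lean document; each statement's English description precedes it below -/
import Mathlib

section
/- Let n ≥ 2, let W ⊆ ℂⁿ be a real-linear subspace of real dimension n, and let w₁,…,wₙ be a basis of W orthonormal with respect to Re⟨·,·⟩. Then |det(w₁,…,wₙ)|⁴ = det(id_W + J_W ∘ J_W). (Equivalently, if ±i·cos θ₁, …, ±i·cos θ_m, with 0 ≤ θⱼ ≤ π/2 and m = ⌊n/2⌋, are the nonreal eigenvalue pairs of J_W, then |det(w₁,…,wₙ)| = Π_{j=1}^m sin θⱼ.) -/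
open MeasureTheory
open scoped ENNReal

noncomputable section

/-- `ℂⁿ`, regarded as a real inner product space via `Re⟨z,w⟫`. -/
abbrev Cn (n : ℕ) := EuclideanSpace ℂ (Fin n)

instance (n : ℕ) : MeasurableSpace (Cn n) := borel _
instance (n : ℕ) : BorelSpace (Cn n) := ⟨rfl⟩

/-- The determinant of the complex `n × n` matrix whose columns are `w 0, …, w (n-1)`. -/
def detC {n : ℕ} (w : Fin n → Cn n) : ℂ := Matrix.det (Matrix.of fun i j => w j i)

/-- `w` is a basis of the real subspace `W` which is orthonormal for the real inner
product `Re⟨·,·⟩` on `ℂⁿ`. -/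
def IsONBasisOf {n : ℕ} (w : Fin n → Cn n) (W : Submodule ℝ (Cn n)) : Prop :=
  (∀ i, w i ∈ W) ∧ Submodule.span ℝ (Set.range w) = W ∧ Orthonormal ℝ w

/-- Multiplication by `i` on `ℂⁿ`, as a real-linear endomorphism. -/
def Jmap (n : ℕ) : Cn n →ₗ[ℝ] Cn n :=
  ((Complex.I : ℂ) • (LinearMap.id : Cn n →ₗ[ℂ] Cn n)).restrictScalars ℝ

/-- `J_W = π_W ∘ J|_W : W → W`, where `π_W` is the orthogonal projection (w.r.t. the real
inner product `Re⟨·,·⟩`) onto the real subspace `W ⊆ ℂⁿ`. -/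
def JW {n : ℕ} (W : Submodule ℝ (Cn n)) : W →ₗ[ℝ] W :=
  (W.orthogonalProjection).toLinearMap ∘ₗ (Jmap n) ∘ₗ W.subtype

/-- On `ℂⁿ`, the real inner product is the real part of the complex one. -/
lemma real_inner_Cn {n : ℕ} (x y : Cn n) : (inner ℝ x y : ℝ) = (inner ℂ x y : ℂ).re := by
  simp [PiLp.inner_apply, Complex.inner, RCLike.inner_apply, Complex.re_sum]

set_option maxHeartbeats 1000000 in
/-- For an `n`-dimensional real subspace `W ⊆ ℂⁿ` with orthonormal basis `w`, the fourth
power of `|Θ(W)| = |det(w₁,…,wₙ)|` equals `det(id_W + J_W²)`. -/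
theorem abs_detC_pow_four (n : ℕ) (hn : 2 ≤ n) (W : Submodule ℝ (Cn n))
    (hW : Module.finrank ℝ W = n) (w : Fin n → Cn n) (hw : IsONBasisOf w W) :
    ‖detC w‖ ^ 4 =
      LinearMap.det ((LinearMap.id : W →ₗ[ℝ] W) + JW W ∘ₗ JW W) := by
  obtain ⟨hmem, hspan, hon⟩ := hw
  haveI : Nonempty (Fin n) := ⟨⟨0, by omega⟩⟩
  set v : Fin n → W := fun i => ⟨w i, hmem i⟩ with hv
  have hon' : Orthonormal ℝ v := by
    constructor
    · intro i; exact hon.1 i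
    · intro i j hij; exact hon.2 hij
  have hli : LinearIndependent ℝ v := hon'.linearIndependent
  let bb : Module.Basis (Fin n) ℝ W := basisOfLinearIndependentOfCardEqFinrank hli (by simp [hW])
  have hbb : ⇑bb = v := coe_basisOfLinearIndependentOfCardEqFinrank hli _
  have hrepr : ∀ (x : W) (j : Fin n), bb.repr x j = (inner ℝ (v j) x : ℝ) := by
    intro x j
    have h1 := bb.sum_repr x
    conv_rhs => rw [← h1]
    rw [hbb] at *
    exact (hon'.inner_right_fintype _ _).symm
  -- the Gram matrix and its imaginary part
  set G : Matrix (Fin n) (Fin n) ℂ := Matrix.of fun j k => (inner ℂ (w j) (w k) : ℂ) with hG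
  set S : Matrix (Fin n) (Fin n) ℝ := Matrix.of fun j k => (G j k).im with hS
  set Sc : Matrix (Fin n) (Fin n) ℂ := S.map (algebraMap ℝ ℂ) with hSc
  -- the real part of the Gram matrix is the identity
  have hre : ∀ j k, (G j k).re = if j = k then 1 else 0 := by
    intro j k
    rw [hG, Matrix.of_apply, ← real_inner_Cn]
    rcases eq_or_ne j k with h | h
    · subst h; rw [real_inner_self_eq_norm_sq, hon.1 j]; simp
    · simp [hon.2 h, h]
  -- the matrix of `J_W` in the basis `bb` is `-S`
  have hM : LinearMap.toMatrix bb bb (JW W) = -S := by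
    ext j k
    rw [LinearMap.toMatrix_apply, hrepr]
    have h2 : JW W (bb k) = W.orthogonalProjection (Complex.I • (w k : Cn n)) := by
      rw [hbb]; rfl
    rw [h2, Submodule.inner_orthogonalProjection_eq_of_mem_left (K := W) (v j), real_inner_Cn]
    have h3 : (inner ℂ (w j) (Complex.I • w k) : ℂ) = Complex.I * inner ℂ (w j) (w k) :=
      inner_smul_right _ _ _
    show (inner ℂ ((v j : Cn n)) (Complex.I • w k) : ℂ).re = _
    rw [show ((v j : Cn n)) = w j from rfl, h3]
    simp [hS, hG, Matrix.neg_apply]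
  -- determinant of `id + J_W²` as a matrix determinant
  have hdet : LinearMap.det ((LinearMap.id : W →ₗ[ℝ] W) + JW W ∘ₗ JW W)
      = Matrix.det ((1 : Matrix (Fin n) (Fin n) ℝ) + S * S) := by
    rw [← LinearMap.det_toMatrix bb]
    congr 1
    rw [LinearEquiv.map_add, LinearMap.toMatrix_id, LinearMap.toMatrix_comp bb bb bb, hM,
      Matrix.neg_mul, Matrix.mul_neg, neg_neg]
  -- the Gram matrix in terms of the column matrix `A`
  set A : Matrix (Fin n) (Fin n) ℂ := Matrix.of fun i j => w j i with hA
  have hGA : G = A.conjTranspose * A := by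
    ext j k
    simp [hG, hA, Matrix.mul_apply, Matrix.conjTranspose_apply, PiLp.inner_apply,
      RCLike.inner_apply]
    exact Finset.sum_congr rfl fun _ _ => mul_comm _ _
  have hdetG : G.det = ((‖detC w‖ ^ 2 : ℝ) : ℂ) := by
    rw [hGA, Matrix.det_mul, Matrix.det_conjTranspose]
    have h4 : detC w = A.det := rfl
    rw [← h4, show star (detC w) = (starRingEnd ℂ) (detC w) from rfl, mul_comm,
      Complex.mul_conj]
    norm_cast
    exact (Complex.sq_norm _).symm
  -- `G = 1 + i S`
  have hGS : G = 1 + Complex.I • Sc := by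
    ext j k
    apply Complex.ext
    · simp [hre j k, Matrix.one_apply, Matrix.smul_apply, Matrix.map_apply, hSc,
        apply_ite Complex.re]
    · simp [Matrix.one_apply, Matrix.smul_apply, Matrix.map_apply, hSc, hS, apply_ite]
  set G' : Matrix (Fin n) (Fin n) ℂ := G.map (starRingEnd ℂ) with hG'
  have hG'S : G' = 1 - Complex.I • Sc := by
    rw [hG', hGS]
    ext j k
    simp [Matrix.map_apply, Matrix.one_apply, Matrix.smul_apply, Matrix.sub_apply, hSc,
      apply_ite (starRingEnd ℂ)]
    ring
  have hfact : (1 : Matrix (Fin n) (Fin n) ℂ) + Sc * Sc = G * G' := by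
    rw [hGS, hG'S]
    have h7 : (Complex.I • Sc) * (Complex.I • Sc) = -(Sc * Sc) := by
      rw [Matrix.smul_mul, Matrix.mul_smul, smul_smul, Complex.I_mul_I, neg_one_smul]
    rw [mul_sub, mul_one, add_mul, h7, one_mul]
    abel
  have hdetG' : G'.det = G.det := by
    have h5 : G'.det = starRingEnd ℂ G.det := by
      rw [hG']; exact ((starRingEnd ℂ).map_det G).symm
    rw [h5, hdetG, Complex.conj_ofReal]
  -- put everything together
  rw [hdet]
  apply Complex.ofReal_injective
  have hcast : ((Matrix.det ((1 : Matrix (Fin n) (Fin n) ℝ) + S * S) : ℝ) : ℂ)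
      = Matrix.det ((1 : Matrix (Fin n) (Fin n) ℂ) + Sc * Sc) := by
    have h6 := RingHom.map_det (algebraMap ℝ ℂ) ((1 : Matrix (Fin n) (Fin n) ℝ) + S * S)
    rw [Complex.coe_algebraMap] at h6
    rw [h6]
    congr 1
    rw [RingHom.mapMatrix_apply]
    ext j k
    push_cast [Matrix.map_apply, Matrix.add_apply, Matrix.one_apply, Matrix.mul_apply,
      apply_ite]
    simp [hSc, Matrix.map_apply]
  rw [hcast, hfact, Matrix.det_mul, hdetG', hdetG]
  push_cast
  ring

end
end

section
/- Let n ≥ 2 and let k be a natural number with k ≠ n. Let W₁, W₂ ⊆ ℂⁿ be real-linear subspaces of real dimension k. If there exists g ∈ U(n) with g(W₁) = W₂, then there exists h ∈ SU(n) with h(W₁) = W₂. -/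
open MeasureTheory
open scoped ENNReal

noncomputable section

namespace SUHelper

open Matrix

variable {n : ℕ}

lemma P_mul_P (v : Fin n → ℂ) (hv : ∑ i, star (v i) * v i = 1) :
    vecMulVec v (star v) * vecMulVec v (star v) = vecMulVec v (star v) := by
  ext i j
  simp only [Matrix.mul_apply, vecMulVec_apply, Pi.star_apply]
  have h : ∀ k, v i * star (v k) * (v k * star (v j))
      = star (v k) * v k * (v i * star (v j)) := fun k => by ring
  simp_rw [h, ← Finset.sum_mul, hv, one_mul]

lemma P_herm (v : Fin n → ℂ) :
    (vecMulVec v (star v))ᴴ = vecMulVec v (star v) := by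
  ext i j
  simp [vecMulVec_apply, Matrix.conjTranspose_apply, mul_comm]

/-- The unitary matrix acting as `ω` on `ℂv` and as the identity on its orthocomplement. -/
def phaseMat (ω : ℂ) (v : Fin n → ℂ) : Matrix (Fin n) (Fin n) ℂ :=
  1 + (ω - 1) • vecMulVec v (star v)

lemma phaseMat_star (ω : ℂ) (v : Fin n → ℂ) :
    star (phaseMat ω v) = phaseMat (star ω) v := by
  simp [phaseMat, Matrix.star_eq_conjTranspose, Matrix.conjTranspose_add,
    Matrix.conjTranspose_smul, P_herm, star_sub]

lemma phaseMat_mul (ω₁ ω₂ : ℂ) (v : Fin n → ℂ) (hv : ∑ i, star (v i) * v i = 1) :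
    phaseMat ω₁ v * phaseMat ω₂ v = phaseMat (ω₁ * ω₂) v := by
  set P := vecMulVec v (star v) with hP
  have h2 : P * P = P := P_mul_P v hv
  simp only [phaseMat, add_mul, mul_add, one_mul, mul_one, Matrix.smul_mul,
    Matrix.mul_smul, h2, smul_smul, ← hP]
  rw [← add_smul, add_assoc, ← add_smul]
  congr 2
  ring

lemma phaseMat_one (v : Fin n → ℂ) : phaseMat 1 v = 1 := by
  simp [phaseMat]

lemma phaseMat_mem_unitary (ω : ℂ) (hω : star ω * ω = 1) (v : Fin n → ℂ)
    (hv : ∑ i, star (v i) * v i = 1) :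
    phaseMat ω v ∈ Matrix.unitaryGroup (Fin n) ℂ := by
  rw [Matrix.mem_unitaryGroup_iff]
  rw [phaseMat_star, phaseMat_mul _ _ _ hv, mul_comm ω (star ω), hω, phaseMat_one]

lemma phaseMat_det (ω : ℂ) (v : Fin n → ℂ) (hv : ∑ i, star (v i) * v i = 1) :
    (phaseMat ω v).det = ω := by
  have h1 : (ω - 1) • vecMulVec v (star v) = vecMulVec ((ω - 1) • v) (star v) := by
    ext i j; simp [vecMulVec_apply]; ring
  rw [phaseMat, h1, vecMulVec_eq Unit, Matrix.det_one_add_replicateCol_mul_replicateRow]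
  have : star v ⬝ᵥ (ω - 1) • v = (ω - 1) * ∑ i, star (v i) * v i := by
    simp only [dotProduct, Finset.mul_sum, Pi.smul_apply, Pi.star_apply,
      smul_eq_mul]
    exact Finset.sum_congr rfl fun k _ => by ring
  rw [this, hv]
  ring

lemma phaseMat_apply (ω : ℂ) (v : Fin n → ℂ) (x : Cn n) :
    Matrix.toEuclideanLin (phaseMat ω v) x
      = x + ((ω - 1) * ∑ i, star (v i) * (WithLp.equiv 2 (Fin n → ℂ) x) i) •
          ((WithLp.equiv 2 (Fin n → ℂ)).symm v) := by
  ext j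
  simp [Matrix.toEuclideanLin_apply, phaseMat, Matrix.mulVec, dotProduct,
    vecMulVec_apply, Matrix.one_apply, Finset.sum_add_distrib, Finset.mul_sum,
    Finset.sum_ite_eq', mul_comm, mul_left_comm]

lemma toEuclideanLin_matmul (A B : Matrix (Fin n) (Fin n) ℂ) (x : Cn n) :
    Matrix.toEuclideanLin (A * B) x
      = Matrix.toEuclideanLin A (Matrix.toEuclideanLin B x) := by
  simp [Matrix.toEuclideanLin_apply, Matrix.mulVec_mulVec]

lemma toEuclideanLin_one (x : Cn n) :
    Matrix.toEuclideanLin (1 : Matrix (Fin n) (Fin n) ℂ) x = x := by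
  simp [Matrix.toEuclideanLin_apply]

lemma map_eq_of_maps (A B : Matrix (Fin n) (Fin n) ℂ) (hAB : A * B = 1)
    (W : Submodule ℝ (Cn n))
    (hA : ∀ x ∈ W, Matrix.toEuclideanLin A x ∈ W)
    (hB : ∀ x ∈ W, Matrix.toEuclideanLin B x ∈ W) :
    Submodule.map ((Matrix.toEuclideanLin A).restrictScalars ℝ) W = W := by
  apply le_antisymm
  · rintro y ⟨x, hx, rfl⟩
    exact hA x hx
  · intro y hy
    refine ⟨Matrix.toEuclideanLin B y, hB y hy, ?_⟩
    show Matrix.toEuclideanLin A (Matrix.toEuclideanLin B y) = y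
    rw [← toEuclideanLin_matmul, hAB, toEuclideanLin_one]

lemma smul_mem_of_I_smul_mem {W : Submodule ℝ (Cn n)} {ve : Cn n}
    (h1 : ve ∈ W) (h2 : Complex.I • ve ∈ W) (c : ℂ) : c • ve ∈ W := by
  have hre : (c.re : ℝ) • ve = ((c.re : ℂ)) • ve := by
    rw [← Complex.coe_algebraMap, algebraMap_smul]
  have him : (c.im : ℝ) • (Complex.I • ve) = ((c.im : ℂ) * Complex.I) • ve := by
    rw [mul_smul, ← Complex.coe_algebraMap, algebraMap_smul]
  have key : c • ve = (c.re : ℝ) • ve + (c.im : ℝ) • (Complex.I • ve) := by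
    rw [hre, him, ← add_smul, Complex.re_add_im]
  rw [key]
  exact W.add_mem (W.smul_mem _ h1) (W.smul_mem _ h2)

lemma key_lemma (ω : ℂ) (hω : star ω * ω = 1) (v : Fin n → ℂ)
    (hv : ∑ i, star (v i) * v i = 1) (W : Submodule ℝ (Cn n))
    (hcase : (∀ x ∈ W, ∑ i, star (v i) * (WithLp.equiv 2 (Fin n → ℂ) x) i = 0)
      ∨ ((WithLp.equiv 2 (Fin n → ℂ)).symm v ∈ W ∧
         Complex.I • (WithLp.equiv 2 (Fin n → ℂ)).symm v ∈ W)) :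
    ∃ M ∈ Matrix.unitaryGroup (Fin n) ℂ, M.det = ω ∧
      Submodule.map ((Matrix.toEuclideanLin M).restrictScalars ℝ) W = W := by
  have hmaps : ∀ (ω' : ℂ), ∀ x ∈ W, Matrix.toEuclideanLin (phaseMat ω' v) x ∈ W := by
    intro ω' x hx
    rw [phaseMat_apply]
    rcases hcase with hzero | ⟨hmem, hImem⟩
    · rw [hzero x hx, mul_zero, zero_smul, add_zero]
      exact hx
    · exact W.add_mem hx (smul_mem_of_I_smul_mem hmem hImem _)
  have hωω : ω * star ω = 1 := by rw [mul_comm]; exact hω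
  refine ⟨phaseMat ω v, phaseMat_mem_unitary ω hω v hv, phaseMat_det ω v hv, ?_⟩
  refine map_eq_of_maps _ (phaseMat (star ω) v) ?_ W (hmaps ω) (hmaps (star ω))
  rw [phaseMat_mul _ _ _ hv, hωω, phaseMat_one]

lemma inner_eq_sum (u x : Cn n) :
    (inner ℂ u x : ℂ)
      = ∑ i, star ((WithLp.equiv 2 (Fin n → ℂ)) u i) * (WithLp.equiv 2 (Fin n → ℂ)) x i := by
  simp [PiLp.inner_apply, RCLike.inner_apply, RCLike.star_def]
  exact Finset.sum_congr rfl fun _ _ => mul_comm _ _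

lemma finrank_Cn : Module.finrank ℝ (Cn n) = 2 * n := by
  have h := Module.finrank_mul_finrank ℝ ℂ (Cn n)
  rw [Complex.finrank_real_complex, finrank_euclideanSpace_fin] at h
  omega

lemma exists_good_vector (n k : ℕ) (hk : k ≠ n) (W : Submodule ℝ (Cn n))
    (hW : Module.finrank ℝ W = k) :
    ∃ u : Cn n, ‖u‖ = 1 ∧
      ((∀ x ∈ W, (inner ℂ u x : ℂ) = 0) ∨ (u ∈ W ∧ Complex.I • u ∈ W)) := by
  rcases lt_or_gt_of_ne hk with hlt | hgt
  · -- k < n : take a unit vector orthogonal to the complex span of W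
    set S := Submodule.span ℂ ((W : Set (Cn n))) with hS
    have hfin : Module.finrank ℂ S ≤ k := by
      have b : Module.Basis (Fin k) ℝ W := Module.finBasisOfFinrankEq ℝ W hW
      have hWspan : Submodule.span ℝ (Set.range fun i => ((b i : W) : Cn n)) = W := by
        have : (Set.range fun i => ((b i : W) : Cn n)) = W.subtype '' Set.range b := by
          ext y; simp [Set.range_comp]
        rw [this, ← Submodule.map_span, b.span_eq, Submodule.map_subtype_top]
      have hcongr : Submodule.span ℂ
            ((Submodule.span ℝ (Set.range fun i => ((b i : W) : Cn n))
              : Submodule ℝ (Cn n)) : Set (Cn n))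
          = Submodule.span ℂ ((W : Set (Cn n))) := by rw [hWspan]
      have : S = Submodule.span ℂ (Set.range fun i => ((b i : W) : Cn n)) := by
        rw [hS, ← hcongr]
        exact Submodule.span_span_of_tower ℝ ℂ _
      rw [this]
      exact (finrank_range_le_card (R := ℂ) fun i => ((b i : W) : Cn n)).trans (by simp)
    have hStop : S ≠ ⊤ := by
      intro htop
      rw [htop, finrank_top, finrank_euclideanSpace_fin] at hfin
      omega
    have hbot : Sᗮ ≠ ⊥ := by
      simp only [ne_eq, Submodule.orthogonal_eq_bot_iff]
      exact hStop
    obtain ⟨w, hwS, hw0⟩ := Submodule.exists_mem_ne_zero_of_ne_bot hbot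
    refine ⟨(‖w‖⁻¹ : ℝ) • w, norm_smul_inv_norm hw0, Or.inl ?_⟩
    intro x hx
    have husub : (‖w‖⁻¹ : ℝ) • w ∈ Sᗮ := by
      have : (‖w‖⁻¹ : ℝ) • w = ((‖w‖⁻¹ : ℝ) : ℂ) • w := (algebraMap_smul ℂ _ w).symm
      rw [this]
      exact Sᗮ.smul_mem _ hwS
    have hxS : x ∈ S := Submodule.subset_span hx
    have := (Submodule.mem_orthogonal S _).mp husub x hxS
    rwa [← inner_eq_zero_symm] at this
  · -- k > n : take a unit vector in W ∩ i W
    set J : Cn n ≃ₗ[ℝ] Cn n :=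
      (LinearEquiv.smulOfNeZero ℂ (Cn n) Complex.I Complex.I_ne_zero).restrictScalars ℝ with hJ
    set W' := Submodule.map (J : Cn n →ₗ[ℝ] Cn n) W with hW'
    have hW'rank : Module.finrank ℝ W' = k := by
      rw [hW', LinearEquiv.finrank_map_eq]; exact hW
    have hsum := Submodule.finrank_sup_add_finrank_inf_eq W W'
    have hle : Module.finrank ℝ ↥(W ⊔ W') ≤ 2 * n := by
      rw [← finrank_Cn (n := n)]; exact Submodule.finrank_le _
    have hpos : Module.finrank ℝ ↥(W ⊓ W') ≠ 0 := by
      rw [hW, hW'rank] at hsum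
      omega
    have hne : W ⊓ W' ≠ ⊥ := by
      intro hbot
      rw [hbot, finrank_bot] at hpos
      exact hpos rfl
    obtain ⟨w, hw, hw0⟩ := Submodule.exists_mem_ne_zero_of_ne_bot hne
    obtain ⟨hwW, hwW'⟩ := Submodule.mem_inf.mp hw
    obtain ⟨z, hzW, hzw⟩ := hwW'
    have hJz : Complex.I • z = w := hzw
    have hIw : Complex.I • w ∈ W := by
      have : Complex.I • w = -z := by
        rw [← hJz, smul_smul, Complex.I_mul_I, neg_one_smul]
      rw [this]
      exact W.neg_mem hzW
    refine ⟨(‖w‖⁻¹ : ℝ) • w, norm_smul_inv_norm hw0, Or.inr ⟨W.smul_mem _ hwW, ?_⟩⟩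
    rw [smul_comm]
    exact W.smul_mem _ hIw

end SUHelper

open SUHelper in
/-- For `k ≠ n`, the `U(n)`-orbits and the `SU(n)`-orbits of `k`-dimensional real
subspaces of `ℂⁿ` coincide. -/
theorem su_orbit_eq_u_orbit_of_dim_ne (n k : ℕ) (hn : 2 ≤ n) (hk : k ≠ n)
    (W₁ W₂ : Submodule ℝ (Cn n))
    (hW₁ : Module.finrank ℝ W₁ = k) (hW₂ : Module.finrank ℝ W₂ = k)
    (h : ∃ g ∈ Matrix.unitaryGroup (Fin n) ℂ,
        Submodule.map ((Matrix.toEuclideanLin g).restrictScalars ℝ) W₁ = W₂) :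
    ∃ g ∈ Matrix.specialUnitaryGroup (Fin n) ℂ,
        Submodule.map ((Matrix.toEuclideanLin g).restrictScalars ℝ) W₁ = W₂ := by
  obtain ⟨g, hg, hgmap⟩ := h
  have hdet : g.det ∈ unitary ℂ := Matrix.det_of_mem_unitary hg
  obtain ⟨hdet1, hdet2⟩ := Unitary.mem_iff.mp hdet
  set ω : ℂ := star g.det with hω_def
  have hω : star ω * ω = 1 := by rw [hω_def, star_star]; exact hdet2
  obtain ⟨u, hu1, hucase⟩ := exists_good_vector n k hk W₂ hW₂
  set v : Fin n → ℂ := WithLp.equiv 2 (Fin n → ℂ) u with hv_def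
  have hsymm : (WithLp.equiv 2 (Fin n → ℂ)).symm v = u := by
    rw [hv_def, Equiv.symm_apply_apply]
  have hv : ∑ i, star (v i) * v i = 1 := by
    rw [← inner_eq_sum u u, inner_self_eq_norm_sq_to_K, hu1]
    norm_num
  have hcase : (∀ x ∈ W₂, ∑ i, star (v i) * (WithLp.equiv 2 (Fin n → ℂ) x) i = 0)
      ∨ ((WithLp.equiv 2 (Fin n → ℂ)).symm v ∈ W₂ ∧
         Complex.I • (WithLp.equiv 2 (Fin n → ℂ)).symm v ∈ W₂) := by
    rcases hucase with h1 | h2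
    · exact Or.inl fun x hx => by rw [← inner_eq_sum u x]; exact h1 x hx
    · rw [hsymm]; exact Or.inr h2
  obtain ⟨M, hMu, hMdet, hMmap⟩ := key_lemma ω hω v hv W₂ hcase
  refine ⟨M * g, ?_, ?_⟩
  · rw [Matrix.mem_specialUnitaryGroup_iff]
    refine ⟨mul_mem hMu hg, ?_⟩
    rw [Matrix.det_mul, hMdet, hω_def]
    exact hdet1
  · have hsplit : Submodule.map ((Matrix.toEuclideanLin (M * g)).restrictScalars ℝ) W₁
        = Submodule.map ((Matrix.toEuclideanLin M).restrictScalars ℝ)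
            (Submodule.map ((Matrix.toEuclideanLin g).restrictScalars ℝ) W₁) := by
      ext y
      simp only [Submodule.mem_map, LinearMap.restrictScalars_apply]
      constructor
      · rintro ⟨x, hx, rfl⟩
        exact ⟨Matrix.toEuclideanLin g x, ⟨x, hx, rfl⟩,
          (toEuclideanLin_matmul M g x).symm⟩
      · rintro ⟨y', ⟨x, hx, rfl⟩, rfl⟩
        exact ⟨x, hx, toEuclideanLin_matmul M g x⟩
    rw [hsplit, hgmap, hMmap]

end
end
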